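/- Let μ be an atomless probability measure on ℝ with distribution function F(y) = μ((-∞, y]). Then for every y ∈ ℝ with μ((y, ∞)) > 0, the cumulative hazard equals minus the log of the survival function: ∫_{(-∞,y]} (μ([s, ∞)))⁻¹ dμ(s) = −log μ((y, ∞)); equivalently, 1 − F(y) = exp(−∫_{(-∞,y]} (1 − F(s))⁻¹ dμ(s)). (This is the continuous-part exponential formula used in the reconstruction step of Proposition 1.) -/

import Mathlib

open MeasureTheory Set ProbabilityTheory Filter Topology

private lemma cdf_cont (μ : Measure ℝ) [IsProbabilityMeasure μ] [NullSingletonClass μ] :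
    Continuous (cdf μ) := by
  rw [continuous_iff_continuousAt]
  intro x
  rw [(monotone_cdf μ).continuousAt_iff_leftLim_eq_rightLim, (cdf μ).rightLim_eq]
  refine le_antisymm ((monotone_cdf μ).leftLim_le le_rfl) ?_
  have h := (cdf μ).measure_singleton x
  rw [measure_cdf, measure_singleton] at h
  have := ENNReal.ofReal_eq_zero.mp h.symm
  linarith

private lemma cdf_surj (μ : Measure ℝ) [IsProbabilityMeasure μ] [NullSingletonClass μ] {c : ℝ}
    (hc0 : 0 < c) (hc1 : c < 1) : ∃ a, cdf μ a = c := by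
  obtain ⟨s₁, h₁⟩ := ((tendsto_cdf_atBot μ).eventually_lt_const hc0).exists
  obtain ⟨s₂, h₂⟩ := ((tendsto_cdf_atTop μ).eventually_const_lt hc1).exists
  have hle : s₁ ≤ s₂ := by
    by_contra h
    push_neg at h
    have := monotone_cdf μ h.le
    linarith
  obtain ⟨a, -, ha⟩ := intermediate_value_Icc hle (cdf_cont μ).continuousOn ⟨h₁.le, h₂.le⟩
  exact ⟨a, ha⟩

private lemma measure_cdf_le (μ : Measure ℝ) [IsProbabilityMeasure μ] [NullSingletonClass μ] {t : ℝ}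
    (h0 : 0 ≤ t) (h1 : t < 1) : μ {s | cdf μ s ≤ t} = ENNReal.ofReal t := by
  set S := {s | cdf μ s ≤ t} with hS
  have hub : ∀ t' : ℝ, t < t' → t' < 1 → μ S ≤ ENNReal.ofReal t' := by
    intro t' ht ht1
    obtain ⟨a, ha⟩ := cdf_surj μ (h0.trans_lt ht) ht1
    have hsub : S ⊆ Iic a := by
      intro s hs
      by_contra hsa
      simp only [mem_Iic, not_le] at hsa
      have h2 := monotone_cdf μ hsa.le
      rw [ha] at h2
      have : cdf μ s ≤ t := hs
      linarith
    calc μ S ≤ μ (Iic a) := measure_mono hsub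
    _ = ENNReal.ofReal t' := by rw [← ofReal_cdf, ha]
  have hub' : μ S ≤ ENNReal.ofReal t := by
    by_contra hlt
    push_neg at hlt
    have hm : t < (μ S).toReal :=
      (ENNReal.ofReal_lt_iff_lt_toReal h0 (measure_ne_top μ S)).mp hlt
    have hm1 : (μ S).toReal ≤ 1 := by
      have h := prob_le_one (μ := μ) (s := S)
      simpa using ENNReal.toReal_mono ENNReal.one_ne_top h
    set t' := (t + (μ S).toReal) / 2 with ht'
    have h1' : t < t' := by rw [ht']; linarith
    have h2' : t' < 1 := by rw [ht']; linarith
    have h3' : t' < (μ S).toReal := by rw [ht']; linarith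
    have := hub t' h1' h2'
    have h4 : ENNReal.ofReal t' < μ S :=
      (ENNReal.ofReal_lt_iff_lt_toReal (le_trans h0 h1'.le) (measure_ne_top μ S)).mpr h3'
    exact absurd (this.trans_lt h4) (lt_irrefl _)
  have hlb : ENNReal.ofReal t ≤ μ S := by
    rcases eq_or_lt_of_le h0 with h | h0'
    · simp [← h]
    · obtain ⟨a, ha⟩ := cdf_surj μ h0' h1
      have hsub : Iic a ⊆ S := fun s hs => by
        simp only [hS, mem_setOf_eq]
        calc cdf μ s ≤ cdf μ a := monotone_cdf μ hs
        _ = t := ha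
      calc ENNReal.ofReal t = μ (Iic a) := by rw [← ofReal_cdf, ha]
      _ ≤ μ S := measure_mono hsub
  exact le_antisymm hub' hlb

private lemma map_cdf_eq (μ : Measure ℝ) [IsProbabilityMeasure μ] [NullSingletonClass μ] :
    μ.map (cdf μ) = volume.restrict (Ioc (0:ℝ) 1) := by
  have hF : Measurable (cdf μ) := (monotone_cdf μ).measurable
  have hfin : IsFiniteMeasure (volume.restrict (Ioc (0:ℝ) 1)) := by
    constructor
    rw [Measure.restrict_apply_univ]
    simp
  have hprob : IsFiniteMeasure (μ.map (cdf μ)) := by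
    have : IsProbabilityMeasure (μ.map (cdf μ)) := Measure.isProbabilityMeasure_map hF.aemeasurable
    infer_instance
  refine Measure.ext_of_Iic _ _ (fun a => ?_)
  rw [Measure.map_apply hF measurableSet_Iic, Measure.restrict_apply measurableSet_Iic]
  rcases lt_or_ge a 0 with ha | ha
  · have h1 : (cdf μ) ⁻¹' Iic a = ∅ := by
      ext s
      simp only [mem_preimage, mem_Iic, mem_empty_iff_false, iff_false, not_le]
      exact ha.trans_le (cdf_nonneg μ s)
    have h2 : Iic a ∩ Ioc (0:ℝ) 1 = ∅ := by
      ext x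
      simp only [mem_inter_iff, mem_Iic, mem_Ioc, mem_empty_iff_false, iff_false]
      rintro ⟨hx, hx0, -⟩
      linarith
    rw [h1, h2, measure_empty, measure_empty]
  · rcases lt_or_ge a 1 with ha1 | ha1
    · have h1 : (cdf μ) ⁻¹' Iic a = {s | cdf μ s ≤ a} := rfl
      have h2 : Iic a ∩ Ioc (0:ℝ) 1 = Ioc 0 a := by
        ext x
        simp only [mem_inter_iff, mem_Iic, mem_Ioc]
        constructor
        · rintro ⟨hx, hx0, -⟩; exact ⟨hx0, hx⟩
        · rintro ⟨hx0, hx⟩; exact ⟨hx, hx0, by linarith⟩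
      rw [h1, h2, measure_cdf_le μ ha ha1, Real.volume_Ioc, sub_zero]
    · have h1 : (cdf μ) ⁻¹' Iic a = univ := by
        ext s
        simp only [mem_preimage, mem_Iic, mem_univ, iff_true]
        exact (cdf_le_one μ s).trans ha1
      have h2 : Iic a ∩ Ioc (0:ℝ) 1 = Ioc 0 1 := by
        rw [inter_eq_right]
        exact fun x hx => hx.2.trans ha1
      rw [h1, h2, measure_univ, Real.volume_Ioc, sub_zero, ENNReal.ofReal_one]

theorem cumulative_hazard_eq_neg_log_survival
    (μ : Measure ℝ) [IsProbabilityMeasure μ] [NullSingletonClass μ]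
    (y : ℝ) (hy : 0 < μ (Ioi y)) :
    ∫⁻ s in Iic y, (μ (Ici s))⁻¹ ∂μ
        = ENNReal.ofReal (-Real.log (μ (Ioi y)).toReal) ∧
    μ (Ioi y)
        = ENNReal.ofReal (Real.exp (-(∫⁻ s in Iic y, (μ (Ici s))⁻¹ ∂μ).toReal)) := by
  have hF : Measurable (cdf μ) := (monotone_cdf μ).measurable
  set c := cdf μ y with hc
  have hc0 : 0 ≤ c := cdf_nonneg μ y
  have hc1' : c ≤ 1 := cdf_le_one μ y
  have hIic : μ (Iic y) = ENNReal.ofReal c := (ofReal_cdf μ y).symm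
  have hIoi : μ (Ioi y) = ENNReal.ofReal (1 - c) := by
    have h := measure_compl (measurableSet_Iic (a := y)) (measure_ne_top μ _)
    rw [compl_Iic] at h
    rw [h, hIic, measure_univ, ← ENNReal.ofReal_one, ← ENNReal.ofReal_sub _ hc0]
  have hc1 : c < 1 := by
    by_contra h
    push_neg at h
    rw [hIoi] at hy
    rw [ENNReal.ofReal_eq_zero.mpr (by linarith)] at hy
    exact absurd hy (lt_irrefl _)
  have hIci : ∀ s, μ (Ici s) = ENNReal.ofReal (1 - cdf μ s) := by
    intro s
    have h := measure_compl (measurableSet_Iio (a := s)) (measure_ne_top μ _)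
    rw [compl_Iio] at h
    rw [h, measure_univ, measure_congr (Iio_ae_eq_Iic (a := s)), ← ofReal_cdf μ s,
      ← ENNReal.ofReal_one, ← ENNReal.ofReal_sub _ (cdf_nonneg μ s)]
  -- main computation
  have key : ∫⁻ s in Iic y, (μ (Ici s))⁻¹ ∂μ = ENNReal.ofReal (-Real.log (1 - c)) := by
    have hg : Measurable (fun t : ℝ => (ENNReal.ofReal (1 - t))⁻¹) :=
      ((measurable_const.sub measurable_id).ennreal_ofReal).inv
    have hsub : Iic y ⊆ (cdf μ) ⁻¹' (Iic c) := fun s hs => monotone_cdf μ hs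
    have hpre : MeasurableSet ((cdf μ) ⁻¹' (Iic c)) := hF measurableSet_Iic
    have hset : Iic y =ᵐ[μ] (cdf μ) ⁻¹' (Iic c) := by
      rw [MeasureTheory.ae_eq_set]
      constructor
      · rw [diff_eq_empty.mpr hsub]; simp
      · rw [measure_diff hsub measurableSet_Iic.nullMeasurableSet (measure_ne_top μ _)]
        rw [hIic]
        have : μ ((cdf μ) ⁻¹' (Iic c)) = ENNReal.ofReal c := measure_cdf_le μ hc0 hc1
        rw [this, tsub_self]
    calc ∫⁻ s in Iic y, (μ (Ici s))⁻¹ ∂μ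
        = ∫⁻ s in (cdf μ) ⁻¹' (Iic c), (fun t : ℝ => (ENNReal.ofReal (1 - t))⁻¹) (cdf μ s) ∂μ := by
          rw [setLIntegral_congr hset]
          exact lintegral_congr fun s => by rw [hIci]
      _ = ∫⁻ t in Iic c, (ENNReal.ofReal (1 - t))⁻¹ ∂(μ.map (cdf μ)) :=
          (setLIntegral_map measurableSet_Iic hg hF).symm
      _ = ∫⁻ t in Ioc 0 c, (ENNReal.ofReal (1 - t))⁻¹ := by
          have hseteq : Iic c ∩ Ioc (0:ℝ) 1 = Ioc 0 c := by
            ext x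
            simp only [mem_inter_iff, mem_Iic, mem_Ioc]
            constructor
            · rintro ⟨hx, hx0, -⟩; exact ⟨hx0, hx⟩
            · rintro ⟨hx0, hx⟩; exact ⟨hx, hx0, by linarith⟩
          rw [map_cdf_eq μ, Measure.restrict_restrict measurableSet_Iic, hseteq]
      _ = ∫⁻ t in Ioc 0 c, ENNReal.ofReal ((1 - t)⁻¹) := by
          refine setLIntegral_congr_fun measurableSet_Ioc (fun t ht => ?_)
          rw [ENNReal.ofReal_inv_of_pos (by rcases ht with ⟨-, h2⟩; linarith)]
      _ = ENNReal.ofReal (∫ t in Ioc 0 c, (1 - t)⁻¹) := by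
          rw [ofReal_integral_eq_lintegral_ofReal]
          · have hco : ContinuousOn (fun t : ℝ => (1 - t)⁻¹) (Icc 0 c) := by
              apply ContinuousOn.inv₀ (by fun_prop)
              intro x hx
              rcases hx with ⟨-, h2⟩
              intro h
              have : x = 1 := by linarith
              linarith [this ▸ h2]
            exact (hco.integrableOn_Icc).mono_set Ioc_subset_Icc_self
          · filter_upwards [self_mem_ae_restrict measurableSet_Ioc] with t ht
            rcases ht with ⟨-, h2⟩
            have : (0:ℝ) < 1 - t := by linarith
            positivity
      _ = ENNReal.ofReal (-Real.log (1 - c)) := by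
          congr 1
          rw [← intervalIntegral.integral_of_le hc0]
          have h := intervalIntegral.integral_comp_sub_left (a := 0) (b := c)
            (fun x : ℝ => x⁻¹) 1
          have hne : (0:ℝ) ∉ Set.uIcc (1 - c) 1 := by
            rw [Set.mem_uIcc]
            push_neg
            constructor <;> intro h' <;> linarith
          rw [h, sub_zero, integral_inv hne, div_eq_mul_inv, one_mul, Real.log_inv]
  have htor : (μ (Ioi y)).toReal = 1 - c := by
    rw [hIoi, ENNReal.toReal_ofReal (by linarith)]
  have hlogpos : 0 ≤ -Real.log (1 - c) := by
    rw [neg_nonneg]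
    exact Real.log_nonpos (by linarith) (by linarith)
  constructor
  · rw [key, htor]
  · rw [key, hIoi, ENNReal.toReal_ofReal hlogpos, neg_neg,
      Real.exp_log (by linarith)]
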